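/- For every path-complete graph G = (N, E) on a finite nonempty alphabet S there exists a covering family of languages C_G over S such that the following holds: for every n ≥ 1 and every family F = {f_i : ℝⁿ → ℝⁿ}_{i∈S} of continuous maps, if there exists V = {V_s : ℝⁿ → ℝ}_{s∈N} such that (V, G) is a path-complete Lyapunov function for F, then there exists a C_G-memory-based Lyapunov function W : C_G × ℝⁿ → ℝ for F with the property that for every B ∈ C_G there is a nonempty subset P ⊆ N with W(B, x) = max_{s∈P} V_s(x) for all x ∈ ℝⁿ. -/

import Mathlib

open Filter Topology NNReal

def IsClassKInf (α : ℝ≥0 → ℝ≥0) : Prop :=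
  Continuous α ∧ α 0 = 0 ∧ StrictMono α ∧ ∀ M : ℝ≥0, ∃ r, M ≤ α r

def IsClassKL (β : ℝ≥0 → ℝ≥0 → ℝ≥0) : Prop :=
  Continuous (fun p : ℝ≥0 × ℝ≥0 => β p.1 p.2) ∧
  (∀ t, Continuous (fun r => β r t) ∧ β 0 t = 0 ∧ StrictMono (fun r => β r t)) ∧
  (∀ r, Antitone (β r) ∧ Tendsto (β r) atTop (𝓝 0))

def PathComplete {N S : Type*} (E : Set (N × N × S)) : Prop :=
  ∀ K : ℕ, 1 ≤ K → ∀ j : Fin K → S, ∃ a : Fin (K + 1) → N,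
    ∀ k : Fin K, (a k.castSucc, a k.succ, j k) ∈ E

def sol {n : ℕ} {S : Type*} (f : S → EuclideanSpace ℝ (Fin n) → EuclideanSpace ℝ (Fin n))
    (σ : ℕ → S) (x0 : EuclideanSpace ℝ (Fin n)) : ℕ → EuclideanSpace ℝ (Fin n)
  | 0 => x0
  | k + 1 => f (σ k) (sol f σ x0 k)

def UGAS {n : ℕ} {S : Type*}
    (f : S → EuclideanSpace ℝ (Fin n) → EuclideanSpace ℝ (Fin n)) : Prop :=
  ∃ β : ℝ≥0 → ℝ≥0 → ℝ≥0, IsClassKL β ∧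
    ∀ (σ : ℕ → S) (x0 : EuclideanSpace ℝ (Fin n)) (k : ℕ),
      ‖sol f σ x0 k‖₊ ≤ β ‖x0‖₊ (k : ℝ≥0)

def IsPCLF {n : ℕ} {S N : Type*} (E : Set (N × N × S))
    (f : S → EuclideanSpace ℝ (Fin n) → EuclideanSpace ℝ (Fin n))
    (V : N → EuclideanSpace ℝ (Fin n) → ℝ) : Prop :=
  PathComplete E ∧ (∀ s, Continuous (V s)) ∧
  ∃ (α₁ α₂ : ℝ≥0 → ℝ≥0) (γ : ℝ≥0), IsClassKInf α₁ ∧ IsClassKInf α₂ ∧ γ < 1 ∧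
    (∀ s x, (α₁ ‖x‖₊ : ℝ) ≤ V s x ∧ V s x ≤ (α₂ ‖x‖₊ : ℝ)) ∧
    (∀ a b i, (a, b, i) ∈ E → ∀ x, V b (f i x) ≤ (γ : ℝ) * V a x)

def IsCoveringFamily {S : Type*} (C : Finset (Set (List S))) : Prop :=
  (∀ B ∈ C, Language.IsRegular (B : Language S)) ∧
  (⋃ B ∈ C, B) = Set.univ ∧
  ∀ B ∈ C, ∀ h : S, ∃ C' ∈ C, (fun w => h :: w) '' B ⊆ C'

def IsMBLF {n : ℕ} {S : Type*} (C : Finset (Set (List S)))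
    (f : S → EuclideanSpace ℝ (Fin n) → EuclideanSpace ℝ (Fin n))
    (W : {B // B ∈ C} → EuclideanSpace ℝ (Fin n) → ℝ) : Prop :=
  (∀ B, Continuous (W B)) ∧
  ∃ (α₁ α₂ : ℝ≥0 → ℝ≥0) (γ : ℝ≥0), IsClassKInf α₁ ∧ IsClassKInf α₂ ∧ γ < 1 ∧
    (∀ B x, (α₁ ‖x‖₊ : ℝ) ≤ W B x ∧ W B x ≤ (α₂ ‖x‖₊ : ℝ)) ∧
    (∀ (B C' : {B // B ∈ C}) (h : S),
      (fun w => h :: w) '' (B : Set (List S)) ⊆ (C' : Set (List S)) →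
      ∀ x, W C' (f h x) ≤ (γ : ℝ) * W B x)

def prefixClass {S : Type*} (i : List S) : Set (List S) := {w | w <+: i ∨ i <+: w}


section MBLFAux

variable {S N : Type} [Fintype N]

open Classical in
noncomputable def mblfDelta (E : Set (N × N × S)) (P : Finset N) (h : S) : Finset N :=
  Finset.univ.filter (fun b => ∃ a ∈ P, (a, b, h) ∈ E)

lemma mem_mblfDelta {E : Set (N × N × S)} {P : Finset N} {h : S} {b : N} :
    b ∈ mblfDelta E P h ↔ ∃ a ∈ P, (a, b, h) ∈ E := by
  simp [mblfDelta]

noncomputable def mblfPhiFrom (E : Set (N × N × S)) (w : List S) (R : Finset N) : Finset N :=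
  w.foldr (fun h P => mblfDelta E P h) R

noncomputable def mblfPhi (E : Set (N × N × S)) (w : List S) : Finset N :=
  mblfPhiFrom E w Finset.univ

lemma mblfPhi_cons (E : Set (N × N × S)) (h : S) (w : List S) :
    mblfPhi E (h :: w) = mblfDelta E (mblfPhi E w) h := rfl

lemma path_mem_mblfPhi (E : Set (N × N × S)) :
    ∀ (w : List S) (a : Fin (w.length + 1) → N),
      (∀ k : Fin w.length,
        (a k.castSucc, a k.succ, w[w.length - 1 - k.val]'(by omega)) ∈ E) →
      a (Fin.last w.length) ∈ mblfPhi E w := by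
  intro w
  induction w with
  | nil => intro a _; simp [mblfPhi, mblfPhiFrom]
  | cons h t ih =>
    intro a ha
    rw [mblfPhi_cons, mem_mblfDelta]
    refine ⟨a (Fin.last t.length).castSucc, ?_, ?_⟩
    · have := ih (fun i => a i.castSucc) ?_
      · exact this
      · intro k
        have hk := ha k.castSucc
        have hidx : (h :: t).length - 1 - (k.castSucc : Fin (h::t).length).val
            = (t.length - 1 - k.val) + 1 := by
          simp only [List.length_cons, Fin.coe_castSucc]
          omega
        simp only [hidx, List.getElem_cons_succ] at hk
        simpa only [Fin.succ_castSucc] using hk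
    · have hk := ha (Fin.last t.length)
      have hidx : (h :: t).length - 1 - (Fin.last t.length : Fin (h::t).length).val = 0 := by
        simp
      simp only [hidx, List.getElem_cons_zero] at hk
      simpa [Fin.succ_last] using hk

lemma mblfPhi_nonempty [Nonempty S] {E : Set (N × N × S)} (hpc : PathComplete E)
    (w : List S) : (mblfPhi E w).Nonempty := by
  cases w with
  | nil =>
    obtain ⟨a, -⟩ := hpc 1 le_rfl (fun _ => Classical.arbitrary S)
    exact ⟨a 0, by simp [mblfPhi, mblfPhiFrom]⟩
  | cons h t =>
    obtain ⟨a, ha⟩ := hpc (h :: t).length (by simp)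
      (fun k => (h :: t)[(h :: t).length - 1 - k.val]'(by omega))
    exact ⟨a (Fin.last (h :: t).length), path_mem_mblfPhi E (h :: t) a ha⟩

open Classical in
noncomputable def mblfDFA (E : Set (N × N × S)) (P : Finset N) :
    DFA S (Finset N → Finset N) where
  step q h := fun R => q (mblfDelta E R h)
  start := id
  accept := {q | q Finset.univ = P}

lemma mblfDFA_evalFrom (E : Set (N × N × S)) (P : Finset N) :
    ∀ (w : List S) (q : Finset N → Finset N),
      (mblfDFA E P).evalFrom q w = fun R => q (mblfPhiFrom E w R) := by
  intro w
  induction w with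
  | nil => intro q; rfl
  | cons h t ih =>
    intro q
    show (mblfDFA E P).evalFrom ((mblfDFA E P).step q h) t = _
    rw [ih]
    rfl

lemma mblfPhi_regular (E : Set (N × N × S)) (P : Finset N) :
    Language.IsRegular ((mblfPhi E ⁻¹' {P} : Set (List S)) : Language S) := by
  classical
  refine ⟨Finset N → Finset N, inferInstance, mblfDFA E P, ?_⟩
  ext w
  rw [DFA.mem_accepts]
  show (mblfDFA E P).evalFrom id w ∈ _ ↔ _
  rw [mblfDFA_evalFrom]
  simp [mblfDFA, mblfPhi]
  rfl

end MBLFAux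


/-- Theorem 2: every path-complete graph admits a covering
family of languages such that any PCLF on the graph yields a memory-based
Lyapunov function built from pointwise maxima of the original pieces. -/
theorem pclf_to_mblf {S : Type} [Fintype S] [Nonempty S]
    {N : Type} [Fintype N] (E : Set (N × N × S)) (hpc : PathComplete E) :
    ∃ CG : Finset (Set (List S)), IsCoveringFamily CG ∧
      ∀ (n : ℕ), 1 ≤ n →
        ∀ f : S → EuclideanSpace ℝ (Fin n) → EuclideanSpace ℝ (Fin n),
          (∀ i, Continuous (f i)) →
          ∀ V : N → EuclideanSpace ℝ (Fin n) → ℝ, IsPCLF E f V →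
            ∃ W : {B // B ∈ CG} → EuclideanSpace ℝ (Fin n) → ℝ,
              IsMBLF CG f W ∧
              ∀ B : {B // B ∈ CG}, ∃ (P : Finset N) (hP : P.Nonempty),
                ∀ x, W B x = P.sup' hP fun s => V s x := by
  classical
  refine ⟨Finset.image (fun P => mblfPhi E ⁻¹' {P})
      (Finset.univ.filter fun P : Finset N => ∃ w, mblfPhi E w = P), ?_, ?_⟩
  · refine ⟨?_, ?_, ?_⟩
    · intro B hB
      obtain ⟨P, -, rfl⟩ := Finset.mem_image.mp hB
      exact mblfPhi_regular E P
    · ext w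
      simp only [Set.mem_iUnion, Set.mem_univ, iff_true]
      exact ⟨mblfPhi E ⁻¹' {mblfPhi E w}, Finset.mem_image.mpr ⟨mblfPhi E w,
        Finset.mem_filter.mpr ⟨Finset.mem_univ _, w, rfl⟩, rfl⟩, rfl⟩
    · intro B hB h
      obtain ⟨P, hPmem, rfl⟩ := Finset.mem_image.mp hB
      obtain ⟨-, w₀, hw₀⟩ := Finset.mem_filter.mp hPmem
      refine ⟨mblfPhi E ⁻¹' {mblfDelta E P h}, ?_, ?_⟩
      · refine Finset.mem_image.mpr ⟨mblfDelta E P h,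
          Finset.mem_filter.mpr ⟨Finset.mem_univ _, h :: w₀, ?_⟩, rfl⟩
        rw [mblfPhi_cons, hw₀]
      · rintro - ⟨w, hw, rfl⟩
        simp only [Set.mem_preimage, Set.mem_singleton_iff] at hw ⊢
        rw [mblfPhi_cons, hw]
  · intro n _ f _ V hV
    obtain ⟨-, hVcont, α₁, α₂, γ, hα₁, hα₂, hγ, hbnd, hdec⟩ := hV
    -- choose the subset associated to each language in the family
    have hchoice : ∀ B : {B // B ∈ Finset.image (fun P => mblfPhi E ⁻¹' {P})
        (Finset.univ.filter fun P : Finset N => ∃ w, mblfPhi E w = P)},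
        ∃ P : Finset N, (∃ w, mblfPhi E w = P) ∧ mblfPhi E ⁻¹' {P} = (B : Set (List S)) := by
      rintro ⟨B, hB⟩
      obtain ⟨P, hPmem, rfl⟩ := Finset.mem_image.mp hB
      obtain ⟨-, w₀, hw₀⟩ := Finset.mem_filter.mp hPmem
      exact ⟨P, ⟨w₀, hw₀⟩, rfl⟩
    choose P hPw hPB using hchoice
    have hPne : ∀ B, (P B).Nonempty := by
      intro B
      obtain ⟨w, hw⟩ := hPw B
      exact hw ▸ mblfPhi_nonempty hpc w
    refine ⟨fun B x => (P B).sup' (hPne B) fun s => V s x, ⟨?_, α₁, α₂, γ, hα₁, hα₂, hγ, ?_, ?_⟩, ?_⟩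
    · intro B
      exact Continuous.finset_sup'_apply (hPne B) fun s _ => hVcont s
    · intro B x
      dsimp only
      obtain ⟨s₀, hs₀⟩ := hPne B
      constructor
      · exact le_trans (hbnd s₀ x).1 (Finset.le_sup' (fun s => V s x) hs₀)
      · exact Finset.sup'_le _ _ fun s _ => (hbnd s x).2
    · intro B C' h hsub x
      dsimp only
      obtain ⟨w, hw⟩ := hPw B
      have hwB : w ∈ (B : Set (List S)) := by
        rw [← hPB B]; exact hw
      have hhw : (h :: w) ∈ (C' : Set (List S)) := hsub ⟨w, hwB, rfl⟩
      have hPC : mblfDelta E (P B) h = P C' := by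
        rw [← hPB C'] at hhw
        simpa [mblfPhi_cons, hw] using hhw
      refine Finset.sup'_le _ _ fun b hb => ?_
      rw [← hPC] at hb
      obtain ⟨a, ha, hedge⟩ := mem_mblfDelta.mp hb
      exact le_trans (hdec a b h hedge x)
        (mul_le_mul_of_nonneg_left (Finset.le_sup' (fun s => V s x) ha) γ.2)
    · intro B
      exact ⟨P B, hPne B, fun x => rfl⟩
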